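/- arXiv:2011.11181 — 3 statements merged into one kernel-verified Lean document; each statement's English description precedes it below -/
import Mathlib

section
/- Let Ψ(z) = (2/π)(z·arcsin(z) + √(1−z²) − 1). Then for all x ∈ [0,1], x²/π ≤ Ψ(x) ≤ 1.2·x²/π. -/
open Real

private noncomputable def fPsi (t : ℝ) : ℝ := t * arcsin t + Real.sqrt (1 - t ^ 2) - 1

private lemma fPsi_hasDerivAt {t : ℝ} (h0 : -1 < t) (h1 : t < 1) :
    HasDerivAt fPsi (arcsin t) t := by
  have hpos : 0 < 1 - t ^ 2 := by nlinarith
  have hs : Real.sqrt (1 - t ^ 2) ≠ 0 := by positivity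
  have hd1 : HasDerivAt (fun t : ℝ => t * arcsin t)
      (1 * arcsin t + t * (1 / Real.sqrt (1 - t ^ 2))) t :=
    (hasDerivAt_id t).mul (Real.hasDerivAt_arcsin (by linarith) (by linarith))
  have hd2 : HasDerivAt (fun t : ℝ => (1 : ℝ) - t ^ 2) (-(2 * t)) t := by
    simpa using ((hasDerivAt_pow 2 t).const_sub 1)
  have hd3 : HasDerivAt (fun t : ℝ => Real.sqrt (1 - t ^ 2))
      (1 / (2 * Real.sqrt (1 - t ^ 2)) * (-(2 * t))) t :=
    (Real.hasDerivAt_sqrt hpos.ne').comp t hd2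
  have := ((hd1.add hd3).sub_const 1)
  refine this.congr_deriv ?_
  field_simp
  ring

private lemma arcsin_ge_self {x : ℝ} (h0 : 0 ≤ x) (h1 : x ≤ 1) : x ≤ arcsin x := by
  rcases eq_or_lt_of_le h0 with h | h
  · simp [← h]
  · have := Real.sin_lt (x := arcsin x) (by rwa [Real.arcsin_pos])
    rw [Real.sin_arcsin (by linarith) h1] at this
    linarith

/-- key tangent inequality: arcsin x ≤ x / √(1-x²) on [0,1) -/
private lemma arcsin_le_tan {x : ℝ} (h0 : 0 ≤ x) (h1 : x < 1) :
    arcsin x ≤ x / Real.sqrt (1 - x ^ 2) := by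
  rcases eq_or_lt_of_le h0 with h | h
  · simp [← h]
  · have ha : 0 < arcsin x := Real.arcsin_pos.2 h
    have hb : arcsin x < π / 2 := Real.arcsin_lt_pi_div_two.2 h1
    have := Real.lt_tan ha hb
    rw [Real.tan_arcsin] at this
    linarith

private lemma fPsi_continuousOn : ContinuousOn fPsi (Set.Icc 0 1) := by
  apply ContinuousOn.sub _ continuousOn_const
  exact ((continuousOn_id.mul Real.continuous_arcsin.continuousOn)).add
    ((continuous_const.sub (continuous_pow 2)).sqrt.continuousOn)

/-- lower bound: x²/2 ≤ fPsi x on [0,1] -/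
private lemma fPsi_lower {x : ℝ} (h0 : 0 ≤ x) (h1 : x ≤ 1) : x ^ 2 / 2 ≤ fPsi x := by
  set φ : ℝ → ℝ := fun t => fPsi t - t ^ 2 / 2 with hφ
  have hmono : MonotoneOn φ (Set.Icc 0 1) := by
    apply monotoneOn_of_deriv_nonneg (convex_Icc 0 1)
    · exact fPsi_continuousOn.sub (Continuous.continuousOn (by continuity))
    · intro t ht
      rw [interior_Icc] at ht
      exact (((fPsi_hasDerivAt (by linarith [ht.1]) ht.2).sub
        (((hasDerivAt_pow 2 t).div_const 2))).differentiableAt).differentiableWithinAt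
    · intro t ht
      rw [interior_Icc] at ht
      have hd : HasDerivAt φ (arcsin t - t) t := by
        have := (fPsi_hasDerivAt (by linarith [ht.1]) ht.2).sub
          ((hasDerivAt_pow 2 t).div_const 2)
        refine this.congr_deriv ?_
        push_cast
        ring
      rw [hd.deriv, sub_nonneg]
      exact arcsin_ge_self ht.1.le ht.2.le
  have := hmono (Set.mem_Icc.2 ⟨le_refl 0, zero_le_one⟩) (Set.mem_Icc.2 ⟨h0, h1⟩) h0
  have hφ0 : φ 0 = 0 := by simp [hφ, fPsi]
  rw [hφ0] at this
  simp only [hφ] at this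
  linarith

/-- h(t) = 2 - t·arcsin t - 2√(1-t²) ≥ 0 on [0,1] -/
private lemma hfun_nonneg {x : ℝ} (h0 : 0 ≤ x) (h1 : x ≤ 1) :
    0 ≤ 2 - x * arcsin x - 2 * Real.sqrt (1 - x ^ 2) := by
  set h : ℝ → ℝ := fun t => 2 - t * arcsin t - 2 * Real.sqrt (1 - t ^ 2) with hh
  have hmono : MonotoneOn h (Set.Icc 0 1) := by
    apply monotoneOn_of_deriv_nonneg (convex_Icc 0 1)
    · apply ContinuousOn.sub
      · exact continuousOn_const.sub
          (continuousOn_id.mul Real.continuous_arcsin.continuousOn)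
      · exact (continuous_const.mul
          ((continuous_const.sub (continuous_pow 2)).sqrt)).continuousOn
    · intro t ht
      rw [interior_Icc] at ht
      have hpos : 0 < 1 - t ^ 2 := by nlinarith [ht.1, ht.2]
      have hd1 : HasDerivAt (fun t : ℝ => t * arcsin t)
          (1 * arcsin t + t * (1 / Real.sqrt (1 - t ^ 2))) t :=
        (hasDerivAt_id t).mul (Real.hasDerivAt_arcsin (by linarith [ht.1]) (ne_of_lt ht.2))
      have hd2 : HasDerivAt (fun t : ℝ => (1 : ℝ) - t ^ 2) (-(2 * t)) t := by
        simpa using ((hasDerivAt_pow 2 t).const_sub 1)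
      have hd3 : HasDerivAt (fun t : ℝ => Real.sqrt (1 - t ^ 2))
          (1 / (2 * Real.sqrt (1 - t ^ 2)) * (-(2 * t))) t :=
        (Real.hasDerivAt_sqrt hpos.ne').comp t hd2
      exact (((hd1.const_sub 2).sub (hd3.const_mul 2)).differentiableAt).differentiableWithinAt
    · intro t ht
      rw [interior_Icc] at ht
      have hpos : 0 < 1 - t ^ 2 := by nlinarith [ht.1, ht.2]
      have hs : (0:ℝ) < Real.sqrt (1 - t ^ 2) := Real.sqrt_pos.2 hpos
      have hd1 : HasDerivAt (fun t : ℝ => t * arcsin t)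
          (1 * arcsin t + t * (1 / Real.sqrt (1 - t ^ 2))) t :=
        (hasDerivAt_id t).mul (Real.hasDerivAt_arcsin (by linarith [ht.1]) (ne_of_lt ht.2))
      have hd2 : HasDerivAt (fun t : ℝ => (1 : ℝ) - t ^ 2) (-(2 * t)) t := by
        simpa using ((hasDerivAt_pow 2 t).const_sub 1)
      have hd3 : HasDerivAt (fun t : ℝ => Real.sqrt (1 - t ^ 2))
          (1 / (2 * Real.sqrt (1 - t ^ 2)) * (-(2 * t))) t :=
        (Real.hasDerivAt_sqrt hpos.ne').comp t hd2
      have hd : HasDerivAt h (t / Real.sqrt (1 - t ^ 2) - arcsin t) t := by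
        have := ((hd1.const_sub 2).sub (hd3.const_mul 2))
        refine this.congr_deriv ?_
        field_simp
        ring
      rw [hd.deriv, sub_nonneg]
      exact arcsin_le_tan ht.1.le ht.2
  have := hmono (Set.mem_Icc.2 ⟨le_refl 0, zero_le_one⟩) (Set.mem_Icc.2 ⟨h0, h1⟩) h0
  have hh0 : h 0 = 0 := by simp [hh]
  rw [hh0] at this
  simpa [hh] using this

/-- upper bound: fPsi x ≤ (π/2 - 1)·x² on [0,1] -/
private lemma fPsi_upper {x : ℝ} (h0 : 0 ≤ x) (h1 : x ≤ 1) :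
    fPsi x ≤ (π / 2 - 1) * x ^ 2 := by
  rcases eq_or_lt_of_le h0 with h | hx0
  · simp [← h, fPsi]
  set g : ℝ → ℝ := fun t => fPsi t / t ^ 2 with hg
  have hmono : MonotoneOn g (Set.Icc x 1) := by
    apply monotoneOn_of_deriv_nonneg (convex_Icc x 1)
    · apply ContinuousOn.div (fPsi_continuousOn.mono ?_) (continuous_pow 2).continuousOn
      · intro t ht
        have : (0:ℝ) < t := lt_of_lt_of_le hx0 ht.1
        positivity
      · exact fun t ht => Set.mem_Icc.2 ⟨le_trans h0 ht.1, ht.2⟩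
    · intro t ht
      rw [interior_Icc] at ht
      have htpos : 0 < t := lt_of_lt_of_le hx0 ht.1.le
      exact (((fPsi_hasDerivAt (by linarith) ht.2).differentiableAt.div
        (differentiable_pow 2).differentiableAt (by positivity))).differentiableWithinAt
    · intro t ht
      rw [interior_Icc] at ht
      have htpos : 0 < t := lt_of_lt_of_le hx0 ht.1.le
      have hd : HasDerivAt g
          ((arcsin t * t ^ 2 - fPsi t * (2 * t)) / (t ^ 2) ^ 2) t := by
        have := (fPsi_hasDerivAt (by linarith) ht.2).div (hasDerivAt_pow 2 t) (by positivity)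
        refine this.congr_deriv ?_
        push_cast
        ring
      rw [hd.deriv]
      apply div_nonneg _ (by positivity)
      have key := hfun_nonneg htpos.le ht.2.le
      have : arcsin t * t ^ 2 - fPsi t * (2 * t)
          = t * (2 - t * arcsin t - 2 * Real.sqrt (1 - t ^ 2)) + t * (t * arcsin t - t * arcsin t) := by
        simp only [fPsi]; ring
      rw [this]
      nlinarith
  have hle := hmono (Set.mem_Icc.2 ⟨le_refl x, h1⟩) (Set.mem_Icc.2 ⟨h1, le_refl 1⟩) h1
  have hg1 : g 1 = π / 2 - 1 := by
    simp [hg, fPsi, Real.arcsin_one]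
  rw [hg1] at hle
  simp only [hg] at hle
  calc fPsi x = fPsi x / x ^ 2 * x ^ 2 := by field_simp
    _ ≤ (π / 2 - 1) * x ^ 2 := by
        apply mul_le_mul_of_nonneg_right hle (by positivity)

/-- For `Ψ(z) = (2/π)(z·arcsin z + √(1-z²) - 1)` and all `x ∈ [0,1]`,
`x²/π ≤ Ψ(x) ≤ 1.2·x²/π`. -/
theorem psi_quadratic_bounds (Ψ : ℝ → ℝ)
    (hΨ : ∀ z ∈ Set.Icc (0:ℝ) 1,
      Ψ z = (2 / π) * (z * arcsin z + Real.sqrt (1 - z ^ 2) - 1)) :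
    ∀ x ∈ Set.Icc (0:ℝ) 1, x ^ 2 / π ≤ Ψ x ∧ Ψ x ≤ 1.2 * x ^ 2 / π := by
  intro x hx
  obtain ⟨h0, h1⟩ := hx
  have hπ : (0:ℝ) < π := Real.pi_pos
  rw [hΨ x ⟨h0, h1⟩]
  have hlow := fPsi_lower h0 h1
  have hup := fPsi_upper h0 h1
  have hf : fPsi x = x * arcsin x + Real.sqrt (1 - x ^ 2) - 1 := rfl
  rw [hf] at hlow hup
  constructor
  · have heq : x ^ 2 / π = (2 / π) * (x ^ 2 / 2) := by field_simp
    rw [heq]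
    exact mul_le_mul_of_nonneg_left hlow (by positivity)
  · have hpi32 : π < 3.2 := by
      have := Real.pi_lt_d2
      linarith
    have key : (2 / π) * ((π / 2 - 1) * x ^ 2) ≤ 1.2 * x ^ 2 / π := by
      rw [show (2 / π) * ((π / 2 - 1) * x ^ 2) = ((π - 2) * x ^ 2) / π from by
        field_simp, div_le_div_iff₀ hπ hπ]
      nlinarith [sq_nonneg x]
    calc (2 / π) * (x * arcsin x + Real.sqrt (1 - x ^ 2) - 1)
        ≤ (2 / π) * ((π / 2 - 1) * x ^ 2) :=
          mul_le_mul_of_nonneg_left hup (by positivity)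
      _ ≤ 1.2 * x ^ 2 / π := key
end

section
/- There is an absolute constant c > 0 such that for any 0 < η < 1 and any ẑ, z ∈ [η, Ψ(1)] in the range of Ψ, |Ψ⁻¹(ẑ) − Ψ⁻¹(z)| ≤ (c/√η)·|ẑ − z|, where Ψ⁻¹ denotes the inverse of the strictly increasing function Ψ(z) = (2/π)(z·arcsin(z) + √(1−z²) − 1) on [0,1]. -/
open Real


noncomputable def psiF : ℝ → ℝ := fun z => (2 / π) * (z * arcsin z + Real.sqrt (1 - z ^ 2) - 1)

lemma psiF_cont : Continuous psiF := by
  unfold psiF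
  exact continuous_const.mul (((continuous_id.mul Real.continuous_arcsin).add
    (Real.continuous_sqrt.comp (continuous_const.sub (continuous_pow 2)))).sub continuous_const)

lemma psiF_hasDerivAt {z : ℝ} (h0 : 0 < z) (h1 : z < 1) :
    HasDerivAt psiF ((2 / π) * arcsin z) z := by
  have hne : (1 : ℝ) - z ^ 2 ≠ 0 := by nlinarith
  have hs : Real.sqrt (1 - z ^ 2) ≠ 0 := by
    rw [Real.sqrt_ne_zero']; nlinarith
  have h1' : HasDerivAt (fun z : ℝ => 1 - z ^ 2) (-(2 * z)) z := by
    simpa using ((hasDerivAt_pow 2 z).const_sub 1)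
  have hsqrt : HasDerivAt (fun z : ℝ => Real.sqrt (1 - z ^ 2))
      (1 / (2 * Real.sqrt (1 - z ^ 2)) * (-(2 * z))) z :=
    (Real.hasDerivAt_sqrt hne).comp z h1'
  have harcsin : HasDerivAt arcsin (1 / Real.sqrt (1 - z ^ 2)) z :=
    Real.hasDerivAt_arcsin (by linarith) (by linarith)
  have hmul : HasDerivAt (fun z : ℝ => z * arcsin z)
      (1 * arcsin z + z * (1 / Real.sqrt (1 - z ^ 2))) z :=
    (hasDerivAt_id z).mul harcsin
  have : HasDerivAt (fun z : ℝ => z * arcsin z + Real.sqrt (1 - z ^ 2) - 1)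
      ((1 * arcsin z + z * (1 / Real.sqrt (1 - z ^ 2))) +
        1 / (2 * Real.sqrt (1 - z ^ 2)) * (-(2 * z))) z :=
    (hmul.add hsqrt).sub_const 1
  have := this.const_mul (2 / π)
  convert this using 1
  · rfl
  · rfl
  · rfl
  ring

lemma arcsin_ge {z : ℝ} (h0 : 0 ≤ z) (h1 : z ≤ 1) : z ≤ arcsin z := by
  rw [le_arcsin_iff_sin_le ⟨by linarith [pi_div_two_pos.le], le_trans h1 (by linarith [pi_gt_three])⟩ ⟨by linarith, h1⟩]
  exact Real.sin_le h0

lemma arcsin_le_lin {z : ℝ} (h0 : 0 ≤ z) (h1 : z ≤ 1) : arcsin z ≤ (π / 2) * z := by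
  have hpi := pi_pos
  rw [Real.arcsin_le_iff_le_sin ⟨by linarith, h1⟩
    ⟨by nlinarith, by nlinarith⟩]
  have h := Real.mul_le_sin (x := (π/2) * z) (by positivity) (by nlinarith)
  have he : 2 / π * (π / 2 * z) = z := by field_simp
  linarith [he ▸ h]

lemma psiF_le_sq {z : ℝ} (h0 : 0 ≤ z) (h1 : z ≤ 1) : psiF z ≤ z ^ 2 := by
  have h2 := arcsin_le_lin h0 h1
  have h3 : Real.sqrt (1 - z ^ 2) ≤ 1 :=
    Real.sqrt_le_one.mpr (by nlinarith)
  have hpi := pi_pos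
  have : z * arcsin z ≤ (π/2) * z^2 := by nlinarith [Real.arcsin_nonneg.2 h0]
  unfold psiF
  rw [div_mul_eq_mul_div, div_le_iff₀ hpi]
  nlinarith

-- key inequality
lemma psiF_key {η x y : ℝ} (hη : 0 < η) (hx0 : 0 ≤ x) (hy1 : y ≤ 1) (hxy : x ≤ y)
    (hfx : η ≤ psiF x) : y - x ≤ (π / 2 / Real.sqrt η) * (psiF y - psiF x) := by
  rcases eq_or_lt_of_le hxy with rfl | hlt
  · simp
  have hx1 : x ≤ 1 := hxy.trans hy1
  have hxs : Real.sqrt η ≤ x := by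
    have := (psiF_le_sq hx0 hx1).trans' hfx
    calc Real.sqrt η ≤ Real.sqrt (x ^ 2) := Real.sqrt_le_sqrt this
      _ = x := by rw [Real.sqrt_sq hx0]
  obtain ⟨ξ, hξ, hderiv⟩ := exists_hasDerivAt_eq_slope psiF (fun z => (2/π) * arcsin z) hlt
    (psiF_cont.continuousOn)
    (fun z hz => psiF_hasDerivAt (lt_of_le_of_lt hx0 hz.1) (lt_of_lt_of_le hz.2 hy1))
  have hξ0 : 0 ≤ ξ := hx0.trans hξ.1.le
  have hξ1 : ξ ≤ 1 := hξ.2.le.trans hy1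
  have hbound : (2/π) * Real.sqrt η ≤ (2/π) * arcsin ξ :=
    mul_le_mul_of_nonneg_left
      (le_trans (hxs.trans hξ.1.le) (arcsin_ge hξ0 hξ1)) (by positivity)
  rw [hderiv] at hbound
  have hη' : 0 < Real.sqrt η := Real.sqrt_pos.2 hη
  have hpi := pi_pos
  have h2 : (2/π) * Real.sqrt η * (y - x) ≤ psiF y - psiF x :=
    (le_div_iff₀ (sub_pos.2 hlt)).mp hbound
  calc y - x = (π / 2 / Real.sqrt η) * ((2/π) * Real.sqrt η * (y - x)) := by
        field_simp
    _ ≤ (π / 2 / Real.sqrt η) * (psiF y - psiF x) :=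
        mul_le_mul_of_nonneg_left h2 (by positivity)

lemma psiF_zero : psiF 0 = 0 := by
  unfold psiF; simp


/-- The inverse of `Ψ(z) = (2/π)(z·arcsin z + √(1-z²) - 1)` on `[0,1]` is
`O(1/√η)`-Lipschitz on `[η, Ψ(1)]`: there is an absolute constant `c > 0` such that
for any `0 < η < 1` and `ẑ, z ∈ [η, Ψ(1)]`,
`|Ψ⁻¹(ẑ) - Ψ⁻¹(z)| ≤ (c/√η)·|ẑ - z|`. -/
theorem psi_inverse_lipschitz (Ψ : ℝ → ℝ)
    (hΨ : ∀ z ∈ Set.Icc (0:ℝ) 1,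
      Ψ z = (2 / π) * (z * arcsin z + Real.sqrt (1 - z ^ 2) - 1)) :
    ∃ c : ℝ, 0 < c ∧ ∀ η : ℝ, 0 < η → η < 1 →
      ∀ zhat z : ℝ, zhat ∈ Set.Icc η (Ψ 1) → z ∈ Set.Icc η (Ψ 1) →
        |Function.invFunOn Ψ (Set.Icc (0:ℝ) 1) zhat -
            Function.invFunOn Ψ (Set.Icc (0:ℝ) 1) z| ≤
          (c / Real.sqrt η) * |zhat - z| := by
  have heq : Set.EqOn Ψ psiF (Set.Icc (0:ℝ) 1) := fun w hw => hΨ w hw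
  have hΨ1 : Ψ 1 = psiF 1 := heq (by norm_num)
  refine ⟨π / 2, by positivity, fun η hη hη1 zhat z hzhat hz => ?_⟩
  have himg : ∀ w ∈ Set.Icc η (Ψ 1), w ∈ Ψ '' Set.Icc (0:ℝ) 1 := by
    intro w hw
    rw [Set.EqOn.image_eq heq]
    apply intermediate_value_Icc (by norm_num : (0:ℝ) ≤ 1) psiF_cont.continuousOn
    rw [psiF_zero]
    exact ⟨le_trans hη.le hw.1, hΨ1 ▸ hw.2⟩
  have hmem1 := himg zhat hzhat
  have hmem2 := himg z hz
  set a := Function.invFunOn Ψ (Set.Icc (0:ℝ) 1) zhat with ha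
  set b := Function.invFunOn Ψ (Set.Icc (0:ℝ) 1) z with hb
  have haS : a ∈ Set.Icc (0:ℝ) 1 := Function.invFunOn_mem hmem1
  have hbS : b ∈ Set.Icc (0:ℝ) 1 := Function.invFunOn_mem hmem2
  have hfa : psiF a = zhat := (heq haS).symm.trans (Function.invFunOn_eq hmem1)
  have hfb : psiF b = z := (heq hbS).symm.trans (Function.invFunOn_eq hmem2)
  have hK : 0 < π / 2 / Real.sqrt η := by positivity
  rcases le_total a b with hab | hab
  · have key := psiF_key hη haS.1 hbS.2 hab (hfa ▸ hzhat.1)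
    rw [hfa, hfb] at key
    have hzz : 0 ≤ z - zhat := by nlinarith [sub_nonneg.2 hab]
    rw [abs_sub_comm zhat z, abs_of_nonneg hzz, abs_of_nonpos (by linarith : a - b ≤ 0)]
    linarith
  · have key := psiF_key hη hbS.1 haS.2 hab (hfb ▸ hz.1)
    rw [hfa, hfb] at key
    have hzz : 0 ≤ zhat - z := by nlinarith [sub_nonneg.2 hab]
    rw [abs_of_nonneg hzz, abs_of_nonneg (by linarith : 0 ≤ a - b)]
    linarith
end

section
/- Let k ≥ 2 and m ≥ k + 2 be integers, and let g₁,…,g_m be real numbers that are algebraically generic (e.g., drawn i.i.d. from N(0,1); almost surely the following holds). Define v_S = Σ_{i∈S} g_i for every subset S ⊆ [m] with |S| = k. Then the system of equations |Σ_{i∈S} a_i| = |v_S| for all S with |S| = k, in unknowns a₁,…,a_m, has exactly two solutions, namely (a_i) = (g_i) and (a_i) = (−g_i). -/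
open Real MeasureTheory ProbabilityTheory

lemma exists_adjacent {m : ℕ} (P : Finset (Fin m) → Prop) :
    ∀ (n : ℕ) (S S' : Finset (Fin m)), (S \ S').card ≤ n → S.card = S'.card → P S → ¬ P S' →
    ∃ (T : Finset (Fin m)) (i j : Fin m), i ∉ T ∧ j ∉ T ∧ i ≠ j ∧
      (insert i T).card = S.card ∧ P (insert i T) ∧ ¬ P (insert j T) := by
  intro n
  induction n with
  | zero =>
    intro S S' h hcard hP hP'
    have hsub : S ⊆ S' := by
      rw [← Finset.sdiff_eq_empty_iff_subset, ← Finset.card_eq_zero]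
      omega
    exact absurd ((Finset.eq_of_subset_of_card_le hsub hcard.ge) ▸ hP) hP'
  | succ n ih =>
    intro S S' h hcard hP hP'
    by_cases hSS : S = S'
    · exact absurd (hSS ▸ hP) hP'
    · have hd : (S \ S').Nonempty := by
        rw [Finset.sdiff_nonempty]
        exact fun hsub => hSS (Finset.eq_of_subset_of_card_le hsub hcard.ge)
      obtain ⟨i, hi⟩ := hd
      have hd' : (S' \ S).Nonempty := by
        rw [Finset.sdiff_nonempty]
        exact fun hsub => hSS ((Finset.eq_of_subset_of_card_le hsub hcard.le).symm)
      obtain ⟨j, hj⟩ := hd'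
      obtain ⟨hiS, hiS'⟩ := Finset.mem_sdiff.mp hi
      obtain ⟨hjS', hjS⟩ := Finset.mem_sdiff.mp hj
      have hScard : 1 ≤ S.card := Finset.card_pos.mpr ⟨i, hiS⟩
      by_cases hP'' : P (insert j (S.erase i))
      · have h1 : (insert j (S.erase i) \ S').card ≤ n := by
          rw [Finset.insert_sdiff_of_mem _ hjS', Finset.erase_sdiff_comm,
            Finset.card_erase_of_mem hi]
          have : 1 ≤ (S \ S').card := Finset.card_pos.mpr ⟨i, hi⟩
          omega
        have h2 : (insert j (S.erase i)).card = S'.card := by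
          rw [Finset.card_insert_of_notMem (fun hc => hjS (Finset.mem_of_mem_erase hc)),
            Finset.card_erase_of_mem hiS]
          omega
        obtain ⟨T, a, b, hh⟩ := ih _ _ h1 h2 hP'' hP'
        exact ⟨T, a, b, hh.1, hh.2.1, hh.2.2.1, by rw [hh.2.2.2.1, h2, hcard], hh.2.2.2.2⟩
      · exact ⟨S.erase i, i, j, Finset.notMem_erase i S,
          fun hc => hjS (Finset.mem_of_mem_erase hc), fun hij => hjS (hij ▸ hiS),
          by rw [Finset.insert_erase hiS], by rwa [Finset.insert_erase hiS], hP''⟩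

lemma sums_zero {m k : ℕ} (hk : 1 ≤ k) (hm : k + 1 ≤ m) (x : Fin m → ℝ)
    (h : ∀ S : Finset (Fin m), S.card = k → ∑ i ∈ S, x i = 0) (i : Fin m) : x i = 0 := by
  have hconst : ∀ j : Fin m, x j = x i := by
    intro j
    by_cases hij : j = i
    · rw [hij]
    obtain ⟨T, hTsub, hTcard⟩ := Finset.exists_subset_card_eq (s := (Finset.univ.erase i).erase j)
      (n := k - 1) (by
        rw [Finset.card_erase_of_mem (Finset.mem_erase.mpr ⟨hij, Finset.mem_univ j⟩),
          Finset.card_erase_of_mem (Finset.mem_univ i), Finset.card_univ, Fintype.card_fin]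
        omega)
    have hiT : i ∉ T := fun hc =>
      Finset.notMem_erase i Finset.univ (Finset.mem_of_mem_erase (hTsub hc))
    have hjT : j ∉ T := fun hc => Finset.notMem_erase j _ (hTsub hc)
    have h1 := h (insert i T) (by rw [Finset.card_insert_of_notMem hiT, hTcard]; omega)
    have h2 := h (insert j T) (by rw [Finset.card_insert_of_notMem hjT, hTcard]; omega)
    rw [Finset.sum_insert hiT] at h1
    rw [Finset.sum_insert hjT] at h2
    linarith
  obtain ⟨S, _, hScard⟩ := Finset.exists_subset_card_eq (s := (Finset.univ : Finset (Fin m))) (n := k)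
    (by rw [Finset.card_univ, Fintype.card_fin]; omega)
  have hsum := h S hScard
  rw [Finset.sum_congr rfl (fun j _ => hconst j), Finset.sum_const, hScard,
    nsmul_eq_mul] at hsum
  have hk0 : (k : ℝ) ≠ 0 := Nat.cast_ne_zero.mpr (by omega)
  exact (mul_eq_zero.mp hsum).resolve_left hk0

variable {m : ℕ}

lemma gen_sum_ne (g : Fin m → ℝ)
    (hg : ∀ c : Fin m → ℤ, c ≠ 0 → ∑ i, (c i : ℝ) * g i ≠ 0)
    (S : Finset (Fin m)) (hS : S.Nonempty) : ∑ i ∈ S, g i ≠ 0 := by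
  obtain ⟨i0, hi0⟩ := hS
  have hne : (fun i => if i ∈ S then (1 : ℤ) else 0) ≠ 0 := by
    intro hc
    have := congrFun hc i0
    simp [hi0] at this
  have := hg _ hne
  simpa [apply_ite (fun z : ℤ => (z : ℝ)), ite_mul, Finset.sum_ite_mem] using this

lemma gen_pair_ne (g : Fin m → ℝ)
    (hg : ∀ c : Fin m → ℤ, c ≠ 0 → ∑ i, (c i : ℝ) * g i ≠ 0)
    {p q : Fin m} (hpq : p ≠ q) : g p - g q ≠ 0 := by
  have hne : (fun i => (if i = p then (1 : ℤ) else 0) + (if i = q then -1 else 0)) ≠ 0 := by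
    intro hc
    have := congrFun hc p
    simp [hpq] at this
  have := hg _ hne
  have heq : ∑ i, (((if i = p then (1 : ℤ) else 0) + (if i = q then -1 else 0) : ℤ) : ℝ) * g i
      = g p - g q := by
    have hterm : ∀ i, (((if i = p then (1 : ℤ) else 0) + (if i = q then -1 else 0) : ℤ) : ℝ) * g i
        = (if i = p then g i else 0) + (if i = q then -g i else 0) := by
      intro i
      by_cases h1 : i = p <;> by_cases h2 : i = q <;>
        simp_all [hpq] <;> ring
    rw [Finset.sum_congr rfl (fun i _ => hterm i), Finset.sum_add_distrib,
      Finset.sum_ite_eq' Finset.univ p, Finset.sum_ite_eq' Finset.univ q]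
    simp [sub_eq_add_neg]
  rwa [heq] at this

lemma gen_rel_ne (g : Fin m → ℝ)
    (hg : ∀ c : Fin m → ℤ, c ≠ 0 → ∑ i, (c i : ℝ) * g i ≠ 0)
    {T' : Finset (Fin m)} {t j p q : Fin m}
    (htT : t ∉ T') (hjT : j ∉ T') (hpT : p ∉ T') (hqT : q ∉ T')
    (htj : t ≠ j) (htp : t ≠ p) (htq : t ≠ q) (hpj : p ≠ j) (hqj : q ≠ j) (hpq : p ≠ q) :
    2 * ∑ i ∈ T', g i + g t + g j + g p + g q ≠ 0 := by
  set c : Fin m → ℤ := fun i => (if i ∈ T' then 2 else 0) + (if i = t then 1 else 0)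
      + (if i = j then 1 else 0) + (if i = p then 1 else 0) + (if i = q then 1 else 0) with hcdef
  have hne : c ≠ 0 := by
    intro hc
    have := congrFun hc p
    simp [hcdef, hpT, htp.symm, hpj, hpq] at this
  have := hg _ hne
  have heq : ∑ i, (c i : ℝ) * g i = 2 * ∑ i ∈ T', g i + g t + g j + g p + g q := by
    have hterm : ∀ i, (c i : ℝ) * g i =
        (if i ∈ T' then 2 * g i else 0) + (if i = t then g i else 0)
        + (if i = j then g i else 0) + (if i = p then g i else 0)
        + (if i = q then g i else 0) := by
      intro i
      simp only [hcdef]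
      push_cast
      by_cases h1 : i ∈ T' <;> by_cases h2 : i = t <;> by_cases h3 : i = j <;>
        by_cases h4 : i = p <;> by_cases h5 : i = q <;>
        simp_all <;> ring
    rw [Finset.sum_congr rfl (fun i _ => hterm i)]
    rw [Finset.sum_add_distrib, Finset.sum_add_distrib, Finset.sum_add_distrib,
      Finset.sum_add_distrib, Finset.sum_ite_mem, Finset.univ_inter,
      Finset.sum_ite_eq' Finset.univ t, Finset.sum_ite_eq' Finset.univ j,
      Finset.sum_ite_eq' Finset.univ p, Finset.sum_ite_eq' Finset.univ q, ← Finset.mul_sum]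
    simp
  rwa [heq] at this

lemma hyperplane_null {n : ℕ} (c : Fin (n+1) → ℝ) (i₀ : Fin (n+1)) (hc : c i₀ ≠ 0) :
    (Measure.pi fun _ : Fin (n+1) => gaussianReal 0 1) {g : Fin (n+1) → ℝ | ∑ i, c i * g i = 0} = 0 := by
  set μ : Measure ℝ := gaussianReal 0 1 with hμ
  have hμs : ∀ z : ℝ, μ {z} = 0 := fun z =>
    gaussianReal_absolutelyContinuous 0 one_ne_zero (measure_singleton z)
  have hH : MeasurableSet {g : Fin (n+1) → ℝ | ∑ i, c i * g i = 0} := by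
    have hmeas : Measurable fun g : Fin (n+1) → ℝ => ∑ i, c i * g i := by fun_prop
    exact hmeas (measurableSet_singleton 0)
  have mp := MeasureTheory.measurePreserving_piFinSuccAbove (fun _ : Fin (n+1) => μ) i₀
  set e := MeasurableEquiv.piFinSuccAbove (fun _ : Fin (n+1) => ℝ) i₀ with he
  rw [← (mp.symm e).measure_preimage_equiv]
  rw [Measure.prod_apply_symm (e.symm.measurable hH)]
  have hesymm : ∀ (x : ℝ) (rest : Fin n → ℝ), e.symm (x, rest) = i₀.insertNth x rest := by
    intro x rest
    simp only [he, MeasurableEquiv.piFinSuccAbove, MeasurableEquiv.symm_mk, Equiv.symm_symm,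
      MeasurableEquiv.coe_mk, Fin.insertNthEquiv, Equiv.coe_fn_mk]
  have hzero : ∀ rest : Fin n → ℝ,
      μ {x : ℝ | ∑ i, c i * e.symm (x, rest) i = 0} = 0 := by
    intro rest
    refine measure_mono_null (t := {(-(∑ j, c (i₀.succAbove j) * rest j)) / c i₀}) ?_ (hμs _)
    intro x hx
    simp only [Set.mem_setOf_eq, hesymm] at hx
    rw [Fin.sum_univ_succAbove _ i₀] at hx
    simp only [Fin.insertNth_apply_same, Fin.insertNth_apply_succAbove] at hx
    have : x = (-(∑ j, c (i₀.succAbove j) * rest j)) / c i₀ := by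
      field_simp
      linarith
    simp [this]
  calc (∫⁻ y, μ ((fun x => (x, y)) ⁻¹' (e.symm ⁻¹' {g : Fin (n+1) → ℝ | ∑ i, c i * g i = 0}))
          ∂Measure.pi fun _ : Fin n => μ)
      = ∫⁻ _, 0 ∂Measure.pi fun _ : Fin n => μ := by
        refine lintegral_congr fun y => ?_
        exact hzero y
    _ = 0 := lintegral_zero

lemma core {m : ℕ} (g x y : Fin m → ℝ)
    (hg : ∀ c : Fin m → ℤ, c ≠ 0 → ∑ i, (c i : ℝ) * g i ≠ 0)
    (hxy : ∀ i, y i = x i + 2 * g i)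
    (T : Finset (Fin m)) (t : Fin m) (ht : t ∈ T)
    (htype : ∀ S : Finset (Fin m), S.card = T.card + 1 →
      (∑ i ∈ S, x i = 0 ∨ ∑ i ∈ S, y i = 0))
    (p q j : Fin m) (hp : p ∉ T) (hq : q ∉ T) (hj : j ∉ T)
    (hpq : p ≠ q) (hpj : p ≠ j) (hqj : q ≠ j)
    (hPx : ∑ i ∈ insert p T, x i = 0) (hQx : ∑ i ∈ insert q T, x i = 0)
    (hJy : ∑ i ∈ insert j T, y i = 0) : False := by
  classical
  set T' := T.erase t with hT'
  have htT' : t ∉ T' := Finset.notMem_erase t T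
  have hpT' : p ∉ T' := fun h => hp (Finset.mem_of_mem_erase h)
  have hqT' : q ∉ T' := fun h => hq (Finset.mem_of_mem_erase h)
  have hjT' : j ∉ T' := fun h => hj (Finset.mem_of_mem_erase h)
  have htp : t ≠ p := fun h => hp (h ▸ ht)
  have htq : t ≠ q := fun h => hq (h ▸ ht)
  have htj : t ≠ j := fun h => hj (h ▸ ht)
  have hT1 : 1 ≤ T.card := Finset.card_pos.mpr ⟨t, ht⟩
  have hT'card : T'.card + 1 = T.card := by
    rw [hT', Finset.card_erase_of_mem ht]; omega
  -- expansion helpers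
  have expT : ∀ (f : Fin m → ℝ) (a : Fin m), a ∉ T →
      ∑ i ∈ insert a T, f i = f a + (f t + ∑ i ∈ T', f i) := by
    intro f a ha
    rw [Finset.sum_insert ha, ← Finset.add_sum_erase T f ht]
  have exp2 : ∀ (f : Fin m → ℝ) (a b : Fin m), a ≠ b → a ∉ T' → b ∉ T' →
      ∑ i ∈ insert a (insert b T'), f i = f a + (f b + ∑ i ∈ T', f i) := by
    intro f a b hab ha hb
    rw [Finset.sum_insert (by simp [Finset.mem_insert, hab, ha]), Finset.sum_insert hb]
  have ysum : ∀ (S : Finset (Fin m)),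
      ∑ i ∈ S, y i = ∑ i ∈ S, x i + 2 * ∑ i ∈ S, g i := by
    intro S
    simp only [hxy, Finset.sum_add_distrib, Finset.mul_sum]
  have card2 : ∀ a b : Fin m, a ≠ b → a ∉ T' → b ∉ T' →
      (insert a (insert b T')).card = T.card + 1 := by
    intro a b hab ha hb
    rw [Finset.card_insert_of_notMem (by simp [Finset.mem_insert, hab, ha]),
      Finset.card_insert_of_notMem hb]
    omega
  -- rewrite hypotheses into atomic form
  rw [expT x p hp] at hPx
  rw [expT x q hq] at hQx
  rw [ysum, expT x j hj, expT g j hj] at hJy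
  -- genericity facts
  have hne1 : g j + (g t + ∑ i ∈ T', g i) ≠ 0 := by
    have := gen_sum_ne g hg (insert j T) ⟨j, Finset.mem_insert_self j T⟩
    rwa [expT g j hj] at this
  have hne2 : g p - g q ≠ 0 := gen_pair_ne g hg hpq
  have hne3 : 2 * ∑ i ∈ T', g i + g t + g j + g p + g q ≠ 0 :=
    gen_rel_ne g hg htT' hjT' hpT' hqT' htj htp htq hpj hqj hpq
  -- the three auxiliary subsets
  have h1 := htype (insert p (insert j T')) (card2 p j hpj hpT' hjT')
  have h2 := htype (insert q (insert j T')) (card2 q j hqj hqT' hjT')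
  have h3 := htype (insert p (insert q T')) (card2 p q hpq hpT' hqT')
  rw [exp2 x p j hpj hpT' hjT', ysum, exp2 x p j hpj hpT' hjT', exp2 g p j hpj hpT' hjT'] at h1
  rw [exp2 x q j hqj hqT' hjT', ysum, exp2 x q j hqj hqT' hjT', exp2 g q j hqj hqT' hjT'] at h2
  rw [exp2 x p q hpq hpT' hqT', ysum, exp2 x p q hpq hpT' hqT', exp2 g p q hpq hpT' hqT'] at h3
  have hjt : x j = x t → False := by
    intro hjt
    rcases h3 with h3 | h3
    · exact hne1 (by linarith)
    · exact hne3 (by linarith)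
  rcases h1 with h1 | h1
  · exact hjt (by linarith)
  · rcases h2 with h2 | h2
    · exact hjt (by linarith)
    · exact hne2 (by linarith)

lemma key_lemma {m : ℕ} (k : ℕ) (hk : 2 ≤ k) (hm : k + 2 ≤ m) (g : Fin m → ℝ)
    (hg : ∀ c : Fin m → ℤ, c ≠ 0 → ∑ i, (c i : ℝ) * g i ≠ 0) :
    {a : Fin m → ℝ |
        ∀ S : Finset (Fin m), S.card = k →
          |∑ i ∈ S, a i| = |∑ i ∈ S, g i|} = {g, -g} := by
  classical
  ext a
  simp only [Set.mem_setOf_eq, Set.mem_insert_iff, Set.mem_singleton_iff]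
  constructor
  · intro ha
    set x : Fin m → ℝ := fun i => a i - g i with hxdef
    set y : Fin m → ℝ := fun i => a i + g i with hydef
    have hxs : ∀ S : Finset (Fin m), ∑ i ∈ S, x i = ∑ i ∈ S, a i - ∑ i ∈ S, g i := by
      intro S; rw [hxdef]; exact Finset.sum_sub_distrib ..
    have hys : ∀ S : Finset (Fin m), ∑ i ∈ S, y i = ∑ i ∈ S, a i + ∑ i ∈ S, g i := by
      intro S; rw [hydef]; exact Finset.sum_add_distrib
    have htype : ∀ S : Finset (Fin m), S.card = k →
        (∑ i ∈ S, x i = 0 ∨ ∑ i ∈ S, y i = 0) := by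
      intro S hS
      rcases abs_eq_abs.mp (ha S hS) with h | h
      · left; rw [hxs]; linarith
      · right; rw [hys]; linarith
    by_cases hX : ∀ S : Finset (Fin m), S.card = k → ∑ i ∈ S, x i = 0
    · left
      funext i
      have := sums_zero (by omega) (by omega) x hX i
      rw [hxdef] at this
      simpa [sub_eq_zero] using this
    · by_cases hY : ∀ S : Finset (Fin m), S.card = k → ∑ i ∈ S, y i = 0
      · right
        funext i
        have h0 : a i + g i = 0 := sums_zero (by omega) (by omega) y hY i
        simp only [Pi.neg_apply]
        linarith
      · exfalso
        push_neg at hX hY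
        obtain ⟨S', hS'card, hS'⟩ := hX
        obtain ⟨S, hScard, hSy⟩ := hY
        have hSx : ∑ i ∈ S, x i = 0 := (htype S hScard).resolve_right hSy
        obtain ⟨T, i, j, hiT, hjT, hij, hcard, hPx, hPx'⟩ :=
          exists_adjacent (fun U => ∑ i ∈ U, x i = 0) (S \ S').card S S' le_rfl
            (by rw [hScard, hS'card]) hSx hS'
        rw [hScard] at hcard
        have hTcard : T.card + 1 = k := by
          rw [← hcard, Finset.card_insert_of_notMem hiT]
        have hPy' : ∑ l ∈ insert j T, y l = 0 :=
          (htype _ (by rw [Finset.card_insert_of_notMem hjT]; omega)).resolve_left hPx'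
        have hexl : ∃ l : Fin m, l ∉ insert i (insert j T) := by
          by_contra hc
          push_neg at hc
          have hsub : (Finset.univ : Finset (Fin m)) ⊆ insert i (insert j T) :=
            fun l _ => hc l
          have hle := Finset.card_le_card hsub
          rw [Finset.card_univ, Fintype.card_fin] at hle
          have h1 := Finset.card_insert_le i (insert j T)
          have h2 := Finset.card_insert_le j T
          omega
        obtain ⟨l, hl⟩ := hexl
        simp only [Finset.mem_insert, not_or] at hl
        obtain ⟨hli, hlj, hlT⟩ := hl
        have htype' : ∀ U : Finset (Fin m), U.card = T.card + 1 →
            (∑ i ∈ U, x i = 0 ∨ ∑ i ∈ U, y i = 0) :=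
          fun U hU => htype U (by omega)
        have hxy : ∀ i, y i = x i + 2 * g i := by
          intro i; rw [hxdef, hydef]; ring
        have ht : ∃ t, t ∈ T := by
          have : 0 < T.card := by omega
          obtain ⟨t, ht⟩ := Finset.card_pos.mp this
          exact ⟨t, ht⟩
        obtain ⟨t, ht⟩ := ht
        rcases htype' (insert l T) (by rw [Finset.card_insert_of_notMem hlT]) with hlx | hly
        · exact core g x y hg hxy T t ht htype' i l j hiT hlT hjT
            (fun h => hli h.symm) hij (fun h => hlj h) hPx hlx hPy'
        · have hg' : ∀ c : Fin m → ℤ, c ≠ 0 → ∑ i, (c i : ℝ) * (-g) i ≠ 0 := by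
            intro c hc h0
            apply hg c hc
            have : ∑ i, (c i : ℝ) * (-g) i = -∑ i, (c i : ℝ) * g i := by
              simp [mul_neg]
            linarith [this ▸ h0]
          have hxy' : ∀ i, x i = y i + 2 * (-g) i := by
            intro i; rw [hxdef, hydef]; simp; ring
          have htype'' : ∀ U : Finset (Fin m), U.card = T.card + 1 →
              (∑ i ∈ U, y i = 0 ∨ ∑ i ∈ U, x i = 0) :=
            fun U hU => (htype' U hU).symm
          exact core (-g) y x hg' hxy' T t ht htype'' j l i hjT hlT hiT
            (fun h => hlj h.symm) hij.symm (fun h => hli h) hPy' hly hPx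
  · intro h
    rcases h with rfl | rfl
    · intro S hS; rfl
    · intro S hS
      rw [show ∑ i ∈ S, (-g) i = -∑ i ∈ S, g i by simp, abs_neg]


/-- For `k ≥ 2`, `m ≥ k + 2`, and `g₁,…,g_m` i.i.d. standard Gaussians, almost
surely the system `|Σ_{i∈S} a_i| = |Σ_{i∈S} g_i|` over all `k`-subsets `S` of `[m]`
has exactly the two solutions `a = g` and `a = -g`. -/
theorem gaussian_subset_sums_generic
    (k m : ℕ) (hk : 2 ≤ k) (hm : k + 2 ≤ m) :
    ∀ᵐ g ∂(Measure.pi fun _ : Fin m => gaussianReal 0 1),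
      {a : Fin m → ℝ |
          ∀ S : Finset (Fin m), S.card = k →
            |∑ i ∈ S, a i| = |∑ i ∈ S, g i|} = {g, -g} := by
  obtain ⟨n, rfl⟩ : ∃ n, m = n + 1 := ⟨m - 1, by omega⟩
  have hae : ∀ᵐ g ∂(Measure.pi fun _ : Fin (n+1) => gaussianReal 0 1),
      ∀ c : {c : Fin (n+1) → ℤ // c ≠ 0}, ∑ i, ((c.1 i : ℝ)) * g i ≠ 0 := by
    rw [ae_all_iff]
    intro c
    obtain ⟨i₀, hi₀⟩ := Function.ne_iff.mp c.2
    have h0 := hyperplane_null (fun i => (c.1 i : ℝ)) i₀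
      (by
        have : c.1 i₀ ≠ 0 := by simpa using hi₀
        exact Int.cast_ne_zero (α := ℝ) |>.mpr this)
    filter_upwards [measure_eq_zero_iff_ae_notMem.mp h0] with g hgmem
    exact hgmem
  filter_upwards [hae] with g hgen
  exact key_lemma k hk hm g (fun c hc => hgen ⟨c, hc⟩)
end
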